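/- For every absolutely summable real sequence (λ_j)_{j≥0}, the one-step linear predictor built from the infinite past satisfies ‖X_{k+1} − Σ_{j=0}^∞ λ_j X_{k−j}‖² ≥ σ_ε², and equality holds for the Wiener–Kolmogorov choice λ_j = −a_{j+1}, for which X_{k+1} − Σ_{j=0}^∞ λ_j X_{k−j} = ε_{k+1}. -/

import Mathlib

open scoped RealInnerProductSpace BigOperators

/-- every one-step linear predictor built from the infinite past with
absolutely summable coefficients has mean-squared error at least `σ_ε²`, and equality
holds for the Wiener–Kolmogorov choice `λ_j = -a_{j+1}`, for which
`X_{k+1} - ∑_{j=0}^∞ λ_j X_{k-j} = ε_{k+1}`. -/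
theorem WK_predictor_optimality
    {H : Type*} [NormedAddCommGroup H] [InnerProductSpace ℝ H]
    (σε : ℝ) (hσε : 0 < σε)
    (ε : ℤ → H)
    (hortho : ∀ m n : ℤ, ⟪ε m, ε n⟫ = if m = n then σε ^ 2 else 0)
    (a b : ℕ → ℝ) (ha0 : a 0 = 1) (hb0 : b 0 = 1)
    (hb2 : Summable fun j => (b j) ^ 2)
    (ha1 : Summable fun j => |a j|)
    (X : ℤ → H)
    (hX : ∀ n : ℤ, HasSum (fun j : ℕ => b j • ε (n - (j : ℤ))) (X n))
    (hε : ∀ n : ℤ, HasSum (fun j : ℕ => a j • X (n - (j : ℤ))) (ε n))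
    (k : ℤ) :
    (∀ lam : ℕ → ℝ, (Summable fun j => |lam j|) → ∀ S : H,
      HasSum (fun j : ℕ => lam j • X (k - (j : ℤ))) S →
        σε ^ 2 ≤ ‖X (k + 1) - S‖ ^ 2) ∧
    HasSum (fun j : ℕ => (-(a (j + 1))) • X (k - (j : ℤ))) (X (k + 1) - ε (k + 1)) ∧
    ‖X (k + 1) - (X (k + 1) - ε (k + 1))‖ ^ 2 = σε ^ 2 := by
  have hee : ⟪ε (k + 1), ε (k + 1)⟫ = σε ^ 2 := by
    rw [hortho]; simp
  have hnorm : ‖ε (k + 1)‖ ^ 2 = σε ^ 2 := by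
    rw [← real_inner_self_eq_norm_sq, hee]
  -- ε (k+1) is orthogonal to X m for m ≤ k
  have hXorth : ∀ m : ℤ, m ≤ k → ⟪ε (k + 1), X m⟫ = 0 := by
    intro m hm
    have h := (hX m).mapL (innerSL ℝ (ε (k + 1)))
    have h' : HasSum (fun _ : ℕ => (0 : ℝ)) ⟪ε (k + 1), X m⟫ := by
      convert h using 2 with i
      case e'_3 => rfl
      case e'_6 => rfl
      rw [innerSL_apply_apply, real_inner_smul_right, hortho]
      have : ¬ (k + 1 = m - (i : ℤ)) := by omega
      simp [this]
    exact h'.unique hasSum_zero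
  -- ⟪ε (k+1), X (k+1)⟫ = σε ^ 2
  have hXk1 : ⟪ε (k + 1), X (k + 1)⟫ = σε ^ 2 := by
    have h := (hX (k + 1)).mapL (innerSL ℝ (ε (k + 1)))
    have h' : HasSum (fun i : ℕ => if i = 0 then σε ^ 2 else 0)
        ⟪ε (k + 1), X (k + 1)⟫ := by
      convert h using 2 with i
      case e'_3 => rfl
      case e'_6 => rfl
      rw [innerSL_apply_apply, real_inner_smul_right, hortho]
      rcases Nat.eq_zero_or_pos i with hi | hi
      · subst hi; simp [hb0]
      · have h1 : ¬ (k + 1 = k + 1 - (i : ℤ)) := by omega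
        have h2 : i ≠ 0 := by omega
        simp [h1, h2]
    exact h'.unique (hasSum_ite_eq (0 : ℕ) (σε ^ 2))
  refine ⟨?_, ?_, ?_⟩
  · intro lam _ S hS
    -- ⟪ε (k+1), S⟫ = 0
    have hSorth : ⟪ε (k + 1), S⟫ = 0 := by
      have h := hS.mapL (innerSL ℝ (ε (k + 1)))
      have h' : HasSum (fun _ : ℕ => (0 : ℝ)) ⟪ε (k + 1), S⟫ := by
        convert h using 2 with i
        case e'_3 => rfl
        case e'_6 => rfl
        rw [innerSL_apply_apply, real_inner_smul_right,
          hXorth (k - (i : ℤ)) (by omega), mul_zero]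
      exact h'.unique hasSum_zero
    set Y : H := X (k + 1) - ε (k + 1) - S with hY
    have hdecomp : X (k + 1) - S = ε (k + 1) + Y := by
      rw [hY]; abel
    have hinnerY : ⟪ε (k + 1), Y⟫ = 0 := by
      rw [hY, inner_sub_right, inner_sub_right, hXk1, hee, hSorth]; ring
    rw [hdecomp, norm_add_sq_real, hinnerY, hnorm]
    nlinarith [sq_nonneg ‖Y‖]
  · have h := hε (k + 1)
    have h0 : (fun j : ℕ => a j • X (k + 1 - (j : ℤ))) 0 = X (k + 1) := by
      simp [ha0]
    have h1 : HasSum (fun j : ℕ => a (j + 1) • X (k + 1 - ((j : ℤ) + 1)))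
        (ε (k + 1) - X (k + 1)) := by
      have := (hasSum_nat_add_iff' 1).mpr h
      simpa [ha0] using this
    have h2 := h1.neg
    have hidx : ∀ j : ℕ, k + 1 - ((j : ℤ) + 1) = k - (j : ℤ) := by intro j; ring
    simpa [neg_smul, neg_sub, hidx] using h2
  · have : X (k + 1) - (X (k + 1) - ε (k + 1)) = ε (k + 1) := by abel
    rw [this, hnorm]
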